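/- In a Halin graph G formed from tree T and leaf cycle C, every D3a reduction collapses a triangle consisting of two leaf children of a tree vertex whose only children are those two leaves, together with that parent vertex; and every D3b reduction removes a leaf that is the middle one of three consecutive leaf children of its parent on the cycle C. -/

import Mathlib

/-- A finite graph on a subset of `ℕ`, allowing vertex-set changes under reductions. -/
structure FinGraph where
  verts : Finset ℕ
  Adj : ℕ → ℕ → Prop
  symm : ∀ u v, Adj u v → Adj v u
  loopless : ∀ u, ¬ Adj u u
  support : ∀ u v, Adj u v → u ∈ verts ∧ v ∈ verts

namespace FinGraph

def neighborSet (G : FinGraph) (v : ℕ) : Set ℕ := {u | G.Adj v u}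

/-- The degree of a vertex. -/
noncomputable def degree (G : FinGraph) (v : ℕ) : ℕ := (G.neighborSet v).ncard

/-- Reachability by a walk staying inside the set `S`. -/
def ReachableWithin (G : FinGraph) (S : Set ℕ) (u v : ℕ) : Prop :=
  Relation.ReflTransGen (fun a b => G.Adj a b ∧ a ∈ S ∧ b ∈ S) u v

/-- The subgraph induced on `S` is connected. -/
def ConnectedOn (G : FinGraph) (S : Set ℕ) : Prop :=
  ∀ u ∈ S, ∀ v ∈ S, G.ReachableWithin S u v

def Connected (G : FinGraph) : Prop := G.ConnectedOn ↑G.verts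

/-- 3-vertex-connectivity: more than three vertices, and connected after deleting
any two vertices. -/
def ThreeConnected (G : FinGraph) : Prop :=
  3 < G.verts.card ∧ ∀ x y : ℕ, G.ConnectedOn (↑G.verts \ {x, y})

/-- Graph isomorphism. -/
def Iso (G H : FinGraph) : Prop :=
  ∃ f : ℕ → ℕ, Set.BijOn f ↑G.verts ↑H.verts ∧
    ∀ u ∈ G.verts, ∀ v ∈ G.verts, (G.Adj u v ↔ H.Adj (f u) (f v))

/-- The configuration for a D3a reduction: a triangle `p q r` of degree-three
vertices whose outside neighbors `p' q' r'` are three distinct vertices. -/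
def D3aConfig (G : FinGraph) (p q r p' q' r' : ℕ) : Prop :=
  G.degree p = 3 ∧ G.degree q = 3 ∧ G.degree r = 3 ∧
  G.Adj p q ∧ G.Adj q r ∧ G.Adj p r ∧
  G.Adj p p' ∧ G.Adj q q' ∧ G.Adj r r' ∧
  p' ∉ ({p, q, r} : Set ℕ) ∧ q' ∉ ({p, q, r} : Set ℕ) ∧ r' ∉ ({p, q, r} : Set ℕ) ∧
  p' ≠ q' ∧ p' ≠ r' ∧ q' ≠ r'

/-- A D3a reduction from `G` to `H`: collapse such a triangle to a new vertex `t`. -/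
def D3a (G H : FinGraph) : Prop :=
  ∃ p q r p' q' r' t, G.D3aConfig p q r p' q' r' ∧ t ∉ G.verts ∧
    H.verts = (G.verts \ {p, q, r}) ∪ {t} ∧
    ∀ a b, H.Adj a b ↔
      (G.Adj a b ∧ a ∉ ({p, q, r} : Set ℕ) ∧ b ∉ ({p, q, r} : Set ℕ)) ∨
      (a = t ∧ b ∈ ({p', q', r'} : Set ℕ)) ∨
      (b = t ∧ a ∈ ({p', q', r'} : Set ℕ))

/-- The configuration for a D3b reduction: an induced path `p q r` of degree-three
vertices, all adjacent to a common apex `s`. -/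
def D3bConfig (G : FinGraph) (p q r s : ℕ) : Prop :=
  G.degree p = 3 ∧ G.degree q = 3 ∧ G.degree r = 3 ∧
  G.Adj p q ∧ G.Adj q r ∧ ¬ G.Adj p r ∧ p ≠ r ∧
  G.Adj s p ∧ G.Adj s q ∧ G.Adj s r

/-- A D3b reduction from `G` to `H`: delete the middle vertex `q` and add edge `pr`. -/
def D3b (G H : FinGraph) : Prop :=
  ∃ p q r s, G.D3bConfig p q r s ∧
    H.verts = G.verts \ {q} ∧
    ∀ a b, H.Adj a b ↔
      (G.Adj a b ∧ a ≠ q ∧ b ≠ q) ∨ (a = p ∧ b = r) ∨ (a = r ∧ b = p)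

/-- A single D3 reduction. -/
def D3Step (G H : FinGraph) : Prop := G.D3a H ∨ G.D3b H

/-- `G` is a complete graph on four vertices. -/
def IsK4 (G : FinGraph) : Prop :=
  G.verts.card = 4 ∧ ∀ u ∈ G.verts, ∀ v ∈ G.verts, u ≠ v → G.Adj u v

/-- A graph is D3-reducible if some sequence of D3 reductions takes it to `K₄`. -/
def D3Reducible (G : FinGraph) : Prop :=
  ∃ H, Relation.ReflTransGen D3Step G H ∧ H.IsK4

/-- No D3 reduction applies. -/
def Irreducible (G : FinGraph) : Prop := ¬ ∃ H, G.D3Step H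

/-- `H` is a minor of `G`, witnessed by connected, disjoint branch sets. -/
def HasMinor (G H : FinGraph) : Prop :=
  ∃ B : ℕ → Finset ℕ,
    (∀ v ∈ H.verts, (B v).Nonempty ∧ ↑(B v) ⊆ (↑G.verts : Set ℕ) ∧ G.ConnectedOn ↑(B v)) ∧
    (∀ u ∈ H.verts, ∀ v ∈ H.verts, u ≠ v → Disjoint (B u) (B v)) ∧
    (∀ u v, H.Adj u v → ∃ a ∈ B u, ∃ b ∈ B v, G.Adj a b)

def K5Graph : FinGraph where
  verts := Finset.range 5
  Adj a b := a ≠ b ∧ a < 5 ∧ b < 5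
  symm := fun _ _ h => ⟨Ne.symm h.1, h.2.2, h.2.1⟩
  loopless := fun _ h => h.1 rfl
  support := fun _ _ h => ⟨Finset.mem_range.2 h.2.1, Finset.mem_range.2 h.2.2⟩

def K33Graph : FinGraph where
  verts := Finset.range 6
  Adj a b := (a < 3 ∧ 3 ≤ b ∧ b < 6) ∨ (b < 3 ∧ 3 ≤ a ∧ a < 6)
  symm := fun _ _ h => h.elim Or.inr Or.inl
  loopless := by intro u h; rcases h with ⟨h1, h2, _⟩ | ⟨h1, h2, _⟩ <;> omega
  support := by
    intro u v h
    constructor <;> rw [Finset.mem_range] <;>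
      rcases h with ⟨h1, h2, h3⟩ | ⟨h1, h2, h3⟩ <;> omega

/-- Planarity, via Wagner's characterization: no `K₅` and no `K₃,₃` minor. -/
def Planar (G : FinGraph) : Prop := ¬ G.HasMinor K5Graph ∧ ¬ G.HasMinor K33Graph

/-- `T` is a tree: nonempty, connected, and every edge is a bridge (acyclicity). -/
def IsTreeGraph (T : FinGraph) : Prop :=
  T.verts.Nonempty ∧ T.Connected ∧
  ∀ u v, T.Adj u v → ¬ Relation.ReflTransGen
    (fun a b => T.Adj a b ∧ ¬(a = u ∧ b = v) ∧ ¬(a = v ∧ b = u)) u v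

def IsLeaf (T : FinGraph) (v : ℕ) : Prop := T.degree v = 1

/-- The edges of `G` not in the spanning tree `T` (the candidate cycle edges). -/
def cycleAdj (G T : FinGraph) (a b : ℕ) : Prop := G.Adj a b ∧ ¬ T.Adj a b

/-- `G` is a Halin graph with underlying tree `T`: `T` is a spanning tree with at
least four vertices and no degree-two vertex, the non-tree edges form a single
cycle passing exactly through the leaves of `T`, and `G` is planar (which forces
the cycle to traverse the leaves in the cyclic order of a planar embedding of `T`). -/
def IsHalinVia (G T : FinGraph) : Prop :=
  IsTreeGraph T ∧ T.verts = G.verts ∧ 4 ≤ T.verts.card ∧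
  (∀ v ∈ T.verts, T.degree v ≠ 2) ∧
  (∀ a b, T.Adj a b → G.Adj a b) ∧
  (∀ a b, cycleAdj G T a b → T.IsLeaf a ∧ T.IsLeaf b) ∧
  (∀ v ∈ G.verts, T.IsLeaf v → {u | cycleAdj G T v u}.ncard = 2) ∧
  (∀ u v, u ∈ G.verts → v ∈ G.verts → T.IsLeaf u → T.IsLeaf v →
    Relation.ReflTransGen (cycleAdj G T) u v) ∧
  G.Planar

def IsHalin (G : FinGraph) : Prop := ∃ T, IsHalinVia G T

/-- Treewidth at most `k`, via tree decompositions. -/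
def TreewidthLE (G : FinGraph) (k : ℕ) : Prop :=
  ∃ (ι : Type) (T : SimpleGraph ι) (bag : ι → Finset ℕ),
    T.IsTree ∧
    (∀ v ∈ G.verts, ∃ i, v ∈ bag i) ∧
    (∀ u v, G.Adj u v → ∃ i, u ∈ bag i ∧ v ∈ bag i) ∧
    (∀ (v : ℕ) (i j : ι) (p : T.Walk i j), p.IsPath → v ∈ bag i → v ∈ bag j →
      ∀ m ∈ p.support, v ∈ bag m) ∧
    (∀ i, (bag i).card ≤ k + 1)

/-- A face of a 3-connected planar graph, by Tutte's characterization: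
an induced cycle whose complement induces a connected subgraph. -/
def IsFaceCycle (G : FinGraph) (C : Finset ℕ) : Prop :=
  ↑C ⊆ (↑G.verts : Set ℕ) ∧ 3 ≤ C.card ∧
  (∀ v ∈ C, {u | u ∈ C ∧ G.Adj v u}.ncard = 2) ∧
  G.ConnectedOn ↑C ∧
  G.ConnectedOn (↑G.verts \ ↑C)

/-- `D` is the planar dual of the (3-connected planar) graph `G`: its vertices
correspond bijectively to the faces of `G`, with adjacency for faces sharing an edge. -/
def IsDualOf (D G : FinGraph) : Prop :=
  ∃ F : ℕ → Finset ℕ,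
    Set.InjOn F ↑D.verts ∧
    (∀ d ∈ D.verts, IsFaceCycle G (F d)) ∧
    (∀ C, IsFaceCycle G C → ∃ d ∈ D.verts, F d = C) ∧
    (∀ d e, D.Adj d e ↔ d ∈ D.verts ∧ e ∈ D.verts ∧ d ≠ e ∧
      ∃ u v, G.Adj u v ∧ u ∈ F d ∧ v ∈ F d ∧ u ∈ F e ∧ v ∈ F e)

/-- A wheel graph: a hub adjacent to all other vertices, which form a cycle. -/
def IsWheel (G : FinGraph) : Prop :=
  4 ≤ G.verts.card ∧ ∃ h ∈ G.verts,
    (∀ v ∈ G.verts, v ≠ h → G.Adj h v ∧ G.degree v = 3) ∧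
    G.ConnectedOn (↑G.verts \ {h})

/-- Glue the wheel `W` onto `G` along a shared triangular face `{a,b,c}`,
identifying the two faces vertexwise, producing `H`. -/
def GlueStep (G W H : FinGraph) : Prop :=
  ∃ a b c : ℕ, a ≠ b ∧ a ≠ c ∧ b ≠ c ∧
    IsFaceCycle G {a, b, c} ∧ IsFaceCycle W {a, b, c} ∧
    (↑G.verts ∩ ↑W.verts : Set ℕ) = {a, b, c} ∧
    H.verts = G.verts ∪ W.verts ∧
    (∀ u v, H.Adj u v ↔ G.Adj u v ∨ W.Adj u v)

/-- Graphs constructed by gluing wheels together along triangular faces.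
(Each gluing attaches one further wheel along a current triangular face; a glued
face stops being a face, so each face is used at most once, and no graph is
glued to itself.) -/
inductive GluedWheels : FinGraph → Prop
  | base (G : FinGraph) : IsWheel G → GluedWheels G
  | glue (G W H : FinGraph) : GluedWheels G → IsWheel W → GlueStep G W H → GluedWheels H

/-- Delete vertices in `S` from `G`. -/
def removeVerts (G : FinGraph) (S : Finset ℕ) : FinGraph where
  verts := G.verts \ S
  Adj a b := G.Adj a b ∧ a ∉ S ∧ b ∉ S
  symm := fun u v h => ⟨G.symm u v h.1, h.2.2, h.2.1⟩
  loopless := fun u h => G.loopless u h.1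
  support := fun u v h =>
    ⟨Finset.mem_sdiff.2 ⟨(G.support u v h.1).1, h.2.1⟩,
     Finset.mem_sdiff.2 ⟨(G.support u v h.1).2, h.2.2⟩⟩

/-- Delete the edge `uv` from `G`. -/
def deleteEdge (G : FinGraph) (u v : ℕ) : FinGraph where
  verts := G.verts
  Adj a b := G.Adj a b ∧ ¬((a = u ∧ b = v) ∨ (a = v ∧ b = u))
  symm := fun a b h => ⟨G.symm a b h.1, by tauto⟩
  loopless := fun a h => G.loopless a h.1
  support := fun a b h => G.support a b h.1

section Helpers

variable {G T : FinGraph}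

lemma adj_ne {u v : ℕ} (h : G.Adj u v) : u ≠ v :=
  fun e => G.loopless v (e ▸ h)

lemma nbr_finite (G : FinGraph) (v : ℕ) : (G.neighborSet v).Finite :=
  G.verts.finite_toSet.subset (fun u hu => (G.support v u hu).2)

lemma mem_nbr {v u : ℕ} : u ∈ G.neighborSet v ↔ G.Adj v u := Iff.rfl

lemma reach_closed {R : ℕ → ℕ → Prop} {A : Set ℕ} (hA : ∀ a ∈ A, ∀ b, R a b → b ∈ A)
    {u v : ℕ} (hu : u ∈ A) (h : Relation.ReflTransGen R u v) : v ∈ A := by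
  induction h with
  | refl => exact hu
  | tail _ hstep ih => exact hA _ ih _ hstep

lemma set_pair_eq {s : Set ℕ} (h2 : s.ncard = 2) {a b : ℕ} (ha : a ∈ s) (hb : b ∈ s)
    (hab : a ≠ b) : s = {a, b} := by
  obtain ⟨x, y, hxy, rfl⟩ := Set.ncard_eq_two.mp h2
  simp only [Set.mem_insert_iff, Set.mem_singleton_iff] at ha hb
  rcases ha with rfl | rfl <;> rcases hb with rfl | rfl
  · exact absurd rfl hab
  · rfl
  · exact Set.pair_comm _ _
  · exact absurd rfl hab

lemma tree_no_triangle (hT : IsTreeGraph T) {a b c : ℕ} (hab : T.Adj a b) (hbc : T.Adj b c)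
    (hac : T.Adj a c) : False := by
  refine hT.2.2 a b hab (Relation.ReflTransGen.head
    ⟨hac, fun h => adj_ne hbc h.2.symm, fun h => adj_ne hab h.1⟩
    (Relation.ReflTransGen.single
      ⟨T.symm b c hbc, fun h => adj_ne hac h.1.symm, fun h => adj_ne hab h.2.symm⟩))

lemma exists_nbr (hT : IsTreeGraph T) (hcard : 2 ≤ T.verts.card) {v : ℕ}
    (hv : v ∈ T.verts) : ∃ u, T.Adj v u := by
  obtain ⟨w, hw, hne⟩ := Finset.exists_mem_ne (s := T.verts) (by omega) v
  have hr := hT.2.1 v hv w hw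
  rcases Relation.ReflTransGen.cases_head hr with heq | ⟨c, hc, _⟩
  · exact absurd heq.symm hne
  · exact ⟨c, hc.1⟩

lemma leaf_nbr_eq {v t : ℕ} (hleaf : T.IsLeaf v) (h : T.Adj v t) : T.neighborSet v = {t} := by
  obtain ⟨x, hx⟩ := Set.ncard_eq_one.mp hleaf
  have ht : t ∈ T.neighborSet v := h
  rw [hx] at ht ⊢
  simp only [Set.mem_singleton_iff] at ht
  rw [ht]

lemma leaf_nbr_unique {v a b : ℕ} (hleaf : T.IsLeaf v) (ha : T.Adj v a) (hb : T.Adj v b) :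
    a = b := by
  have h1 := leaf_nbr_eq hleaf ha
  have hb' : b ∈ T.neighborSet v := hb
  rw [h1] at hb'
  exact hb'.symm

lemma no_leaf_leaf (hT : IsTreeGraph T) (hcard : 3 ≤ T.verts.card) {u v : ℕ}
    (hu : T.IsLeaf u) (hv : T.IsLeaf v) : ¬ T.Adj u v := by
  intro hadj
  have hmem := T.support u v hadj
  have hsu : T.neighborSet u = {v} := leaf_nbr_eq hu hadj
  have hsv : T.neighborSet v = {u} := leaf_nbr_eq hv (T.symm _ _ hadj)
  obtain ⟨w, hw, hwu, hwv⟩ : ∃ w ∈ T.verts, w ≠ u ∧ w ≠ v := by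
    by_contra hcon
    push_neg at hcon
    have hsub : T.verts ⊆ {u, v} := by
      intro x hx
      by_cases hxu : x = u
      · simp [hxu]
      · simp [hcon x hx hxu]
    have := Finset.card_le_card hsub
    have h2 : ({u, v} : Finset ℕ).card ≤ 2 := Finset.card_le_two
    omega
  have hr := hT.2.1 u hmem.1 w hw
  have : w ∈ ({u, v} : Set ℕ) := by
    refine reach_closed (A := {u, v}) ?_ (by simp) hr
    rintro a ha b ⟨hab, -, -⟩
    rcases ha with rfl | ha
    · have : b ∈ T.neighborSet a := hab
      rw [hsu] at this; simp at this; simp [this]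
    · simp only [Set.mem_singleton_iff] at ha; subst ha
      have : b ∈ T.neighborSet a := hab
      rw [hsv] at this; simp at this; simp [this]
  rcases this with h | h
  · exact hwu h
  · exact hwv h

lemma internal_three (hT : IsTreeGraph T) (hcard : 2 ≤ T.verts.card)
    (hnd2 : ∀ v ∈ T.verts, T.degree v ≠ 2) {v : ℕ} (hv : v ∈ T.verts) (hnl : ¬ T.IsLeaf v) :
    ∃ a b c, a ≠ b ∧ a ≠ c ∧ b ≠ c ∧ T.Adj v a ∧ T.Adj v b ∧ T.Adj v c := by
  have hfin := nbr_finite T v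
  have h1 : 0 < (T.neighborSet v).ncard := by
    obtain ⟨u, hu⟩ := exists_nbr hT hcard hv
    exact (Set.ncard_pos hfin).mpr ⟨u, hu⟩
  have h3 : 3 ≤ (T.neighborSet v).ncard := by
    have h2 := hnd2 v hv
    have hl : T.degree v ≠ 1 := hnl
    unfold degree at h2 hl
    omega
  obtain ⟨t, hts, htc⟩ := Set.exists_subset_card_eq h3
  obtain ⟨a, b, c, hab, hac, hbc, rfl⟩ := Set.ncard_eq_three.mp htc
  exact ⟨a, b, c, hab, hac, hbc, hts (by simp), hts (by simp), hts (by simp)⟩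

lemma chain_path :
    ∀ (t : List ℕ) (a b : ℕ), (a :: b :: t).Chain' T.Adj → (a :: b :: t).Nodup →
      ∀ x ∈ b :: t, Relation.ReflTransGen
        (fun u w => T.Adj u w ∧ u ∈ b :: t ∧ w ∈ a :: b :: t ∧ (w = a → u = b)) x a := by
  intro t
  induction t with
  | nil =>
    intro a b hch hnd x hx
    simp only [List.mem_singleton] at hx
    subst hx
    exact Relation.ReflTransGen.single
      ⟨T.symm _ _ (List.isChain_cons_cons.mp hch).1, by simp, by simp, fun _ => rfl⟩
  | cons c t' ih =>
    intro a b hch hnd x hx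
    rcases List.mem_cons.mp hx with rfl | hx'
    · exact Relation.ReflTransGen.single
        ⟨T.symm _ _ (List.isChain_cons_cons.mp hch).1, by simp, by simp, fun _ => rfl⟩
    · have hch' : (b :: c :: t').Chain' T.Adj := (List.isChain_cons_cons.mp hch).2
      have hnd' : (b :: c :: t').Nodup := hnd.of_cons
      have hnotmem : a ∉ b :: c :: t' := (List.nodup_cons.mp hnd).1
      have hpath := ih b c hch' hnd' x hx'
      have hmono : Relation.ReflTransGen
          (fun u w => T.Adj u w ∧ u ∈ b :: c :: t' ∧ w ∈ a :: b :: c :: t' ∧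
            (w = a → u = b)) x b := by
        refine Relation.ReflTransGen.mono ?_ _ _ hpath
        rintro u w ⟨h1, h2, h3, _⟩
        exact ⟨h1, List.mem_cons_of_mem _ h2, List.mem_cons_of_mem _ h3,
          fun hwa => absurd (hwa ▸ h3) hnotmem⟩
      exact hmono.tail
        ⟨T.symm _ _ (List.isChain_cons_cons.mp hch).1, by simp, by simp, fun _ => rfl⟩

lemma acyclic_no_min2
    (hacyc : ∀ u v, T.Adj u v → ¬ Relation.ReflTransGen
      (fun a b => T.Adj a b ∧ ¬(a = u ∧ b = v) ∧ ¬(a = v ∧ b = u)) u v)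
    (S : Set ℕ) (hfin : S.Finite) (p0 : ℕ) (hp0 : p0 ∈ S)
    (hp0nbr : ∃ x ∈ S, T.Adj p0 x)
    (hrest : ∀ v ∈ S, v ≠ p0 → ∃ x ∈ S, ∃ y ∈ S, x ≠ y ∧ T.Adj v x ∧ T.Adj v y) :
    False := by
  have key : ∀ n : ℕ, ∃ l : List ℕ, l.Chain' T.Adj ∧ l.Nodup ∧ (∀ v ∈ l, v ∈ S) ∧
      l.getLast? = some p0 ∧ l.length = n + 2 := by
    intro n
    induction n with
    | zero =>
      obtain ⟨x, hxS, hadj⟩ := hp0nbr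
      refine ⟨[x, p0], ?_, ?_, ?_, by simp, by simp⟩
      · exact List.isChain_pair.mpr (T.symm _ _ hadj)
      · simp [(adj_ne hadj).symm]
      · intro v hv
        simp only [List.mem_cons, List.mem_singleton, List.not_mem_nil, or_false] at hv
        rcases hv with rfl | rfl <;> assumption
    | succ n ihn =>
      obtain ⟨l, hch, hnd, hS, hlast, hlen⟩ := ihn
      obtain ⟨v, l', rfl⟩ : ∃ v l', l = v :: l' := by
        cases l with
        | nil => simp at hlen
        | cons a l' => exact ⟨a, l', rfl⟩
      obtain ⟨w, t, rfl⟩ : ∃ w t, l' = w :: t := by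
        cases l' with
        | nil => simp at hlen
        | cons a t => exact ⟨a, t, rfl⟩
      have hvS : v ∈ S := hS v (by simp)
      have hp0mem : p0 ∈ w :: t := by
        have h1 : (v :: w :: t).getLast? = (w :: t).getLast? := List.getLast?_cons_cons ..
        rw [h1] at hlast
        have hne : (w :: t) ≠ [] := by simp
        rw [List.getLast?_eq_getLast_of_ne_nil hne] at hlast
        have heq : (w :: t).getLast hne = p0 := Option.some.inj hlast
        exact heq ▸ List.getLast_mem hne
      have hvnot : v ∉ w :: t := (List.nodup_cons.mp hnd).1
      have hvne : v ≠ p0 := fun h => hvnot (h ▸ hp0mem)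
      obtain ⟨x, hxS, y, hyS, hxy, hax, hay⟩ := hrest v hvS hvne
      obtain ⟨z, hzS, hadjz, hzw⟩ : ∃ z ∈ S, T.Adj v z ∧ z ≠ w := by
        by_cases hxw : x = w
        · exact ⟨y, hyS, hay, fun h => hxy (hxw.trans h.symm)⟩
        · exact ⟨x, hxS, hax, hxw⟩
      have hznotin : z ∉ v :: w :: t := by
        intro hzin
        rcases List.mem_cons.mp hzin with rfl | hzin'
        · exact adj_ne hadjz rfl
        · have hpath := chain_path t v w hch hnd z hzin'
          refine hacyc z v (T.symm _ _ hadjz) ?_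
          refine Relation.ReflTransGen.mono ?_ _ _ hpath
          rintro u u' ⟨h1, h2, h3, h4⟩
          refine ⟨h1, ?_, ?_⟩
          · rintro ⟨rfl, rfl⟩
            exact hzw (h4 rfl)
          · rintro ⟨rfl, rfl⟩
            exact (List.nodup_cons.mp hnd).1 h2
      refine ⟨z :: v :: w :: t, ?_, ?_, ?_, ?_, by simp at hlen ⊢; omega⟩
      · exact List.isChain_cons_cons.mpr ⟨T.symm _ _ hadjz, hch⟩
      · exact List.nodup_cons.mpr ⟨hznotin, hnd⟩
      · intro u hu
        rcases List.mem_cons.mp hu with rfl | hu'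
        · exact hzS
        · exact hS u hu'
      · rw [List.getLast?_cons_cons]
        exact hlast
  obtain ⟨l, hch, hnd, hS, hlast, hlen⟩ := key hfin.toFinset.card
  have hsub : l.toFinset ⊆ hfin.toFinset := by
    intro u hu
    rw [List.mem_toFinset] at hu
    exact hfin.mem_toFinset.mpr (hS u hu)
  have hcard := Finset.card_le_card hsub
  rw [List.toFinset_card_of_nodup hnd] at hcard
  omega

lemma third_elem {a b c q s : ℕ} (hab : a ≠ b) (hac : a ≠ c) (hbc : b ≠ c)
    (hq : q ∈ ({a, b, c} : Set ℕ)) (hs : s ∈ ({a, b, c} : Set ℕ)) (hqs : q ≠ s) :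
    ∃ x ∈ ({a, b, c} : Set ℕ), x ≠ q ∧ x ≠ s := by
  simp only [Set.mem_insert_iff, Set.mem_singleton_iff] at hq hs
  rcases hq with rfl | rfl | rfl <;> rcases hs with rfl | rfl | rfl
  · exact absurd rfl hqs
  · exact ⟨c, by simp, hac.symm, hbc.symm⟩
  · exact ⟨b, by simp, hab.symm, hbc⟩
  · exact ⟨c, by simp, hbc.symm, hac.symm⟩
  · exact absurd rfl hqs
  · exact ⟨a, by simp, hab, hac⟩
  · exact ⟨b, by simp, hbc, hab.symm⟩
  · exact ⟨a, by simp, hac, hab⟩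
  · exact absurd rfl hqs

lemma gadj_cases {v u : ℕ} (h : G.Adj v u) : T.Adj v u ∨ cycleAdj G T v u := by
  by_cases ht : T.Adj v u
  · exact Or.inl ht
  · exact Or.inr ⟨h, ht⟩

lemma cycleAdj_symm {a b : ℕ} (h : cycleAdj G T a b) : cycleAdj G T b a :=
  ⟨G.symm _ _ h.1, fun ht => h.2 (T.symm _ _ ht)⟩

lemma internal_TAdj (hH : IsHalinVia G T) {a b : ℕ} (hna : ¬ T.IsLeaf a)
    (hab : G.Adj a b) : T.Adj a b := by
  rcases gadj_cases (T := T) hab with h | h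
  · exact h
  · exact absurd (hH.2.2.2.2.2.1 a b h).1 hna

lemma internal_nbr_eq (hH : IsHalinVia G T) {v : ℕ} (hnl : ¬ T.IsLeaf v) :
    G.neighborSet v = T.neighborSet v := by
  ext u
  exact ⟨fun hu => internal_TAdj hH hnl hu, fun hu => hH.2.2.2.2.1 v u hu⟩

/-- The contradictory D3b subcase in which the middle vertex `q` is a leaf whose
tree neighbor is the endpoint `p` of the induced path. -/
lemma d3b_parent_first (hH : IsHalinVia G T) {p q r s : ℕ} (hcfg : G.D3bConfig p q r s)
    (hlq : T.IsLeaf q) (hqp : T.Adj q p) : False := by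
  have hT := hH.1
  have hTV := hH.2.1
  have hcard := hH.2.2.1
  have hnd2 := hH.2.2.2.1
  have hTG := hH.2.2.2.2.1
  have hcl := hH.2.2.2.2.2.1
  have hc2 := hH.2.2.2.2.2.2.1
  have hre := hH.2.2.2.2.2.2.2.1
  have hH' := hH
  obtain ⟨hdp, hdq, hdr, hpq, hqr, hnpr, hprne, hsp, hsq, hsr⟩ := hcfg
  have hpmem : p ∈ G.verts := (G.support p q hpq).1
  have hqmem : q ∈ G.verts := (G.support p q hpq).2
  have hrmem : r ∈ G.verts := (G.support q r hqr).2
  have hsmem : s ∈ G.verts := (G.support s p hsp).1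
  have hcard3 : 3 ≤ T.verts.card := by omega
  have hcard2 : 2 ≤ T.verts.card := by omega
  -- cycle edges at q
  have cycqr : cycleAdj G T q r := ⟨hqr, fun ht => hprne (leaf_nbr_unique hlq hqp ht)⟩
  have cycqs : cycleAdj G T q s :=
    ⟨G.symm s q hsq, fun ht => adj_ne hsp (leaf_nbr_unique hlq hqp ht).symm⟩
  have hlr : T.IsLeaf r := (hcl q r cycqr).2
  have hls : T.IsLeaf s := (hcl q s cycqs).2
  have hnlp : ¬ T.IsLeaf p := fun hlp => no_leaf_leaf hT hcard3 hlq hlp hqp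
  have hps : G.Adj p s := G.symm s p hsp
  have hTps : T.Adj p s := internal_TAdj hH' hnlp hps
  have hTpq : T.Adj p q := T.symm q p hqp
  have cycsr : cycleAdj G T s r :=
    ⟨hsr, fun ht => hprne (leaf_nbr_unique hls (T.symm p s hTps) ht)⟩
  have cycsq : cycleAdj G T s q := cycleAdj_symm cycqs
  have cycrq : cycleAdj G T r q := cycleAdj_symm cycqr
  have cycrs : cycleAdj G T r s := cycleAdj_symm cycsr
  have hrs : r ≠ s := (adj_ne hsr).symm
  have hqsne : q ≠ s := adj_ne (G.symm s q hsq)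
  have hqrne : q ≠ r := adj_ne hqr
  have cycq : {u | cycleAdj G T q u} = {r, s} :=
    set_pair_eq (hc2 q hqmem hlq) cycqr cycqs hrs
  have cycs : {u | cycleAdj G T s u} = {q, r} :=
    set_pair_eq (hc2 s hsmem hls) cycsq cycsr hqrne
  have cycr : {u | cycleAdj G T r u} = {q, s} :=
    set_pair_eq (hc2 r hrmem hlr) cycrq cycrs hqsne
  -- all leaves lie in {q, r, s}
  have hclosedA : ∀ a ∈ ({q, r, s} : Set ℕ), ∀ b, cycleAdj G T a b → b ∈ ({q, r, s} : Set ℕ) := by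
    rintro a ha b hb
    rcases ha with rfl | rfl | rfl
    · have : b ∈ {u | cycleAdj G T a u} := hb
      rw [cycq] at this
      rcases this with rfl | rfl <;> simp
    · have : b ∈ {u | cycleAdj G T a u} := hb
      rw [cycr] at this
      rcases this with rfl | rfl <;> simp
    · have : b ∈ {u | cycleAdj G T a u} := hb
      rw [cycs] at this
      rcases this with rfl | rfl <;> simp
  have hleafmem : ∀ v ∈ G.verts, T.IsLeaf v → v ∈ ({q, r, s} : Set ℕ) := by
    intro v hv hlv
    exact reach_closed hclosedA (by simp : q ∈ ({q, r, s} : Set ℕ))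
      (hre q v hqmem hv hlq hlv)
  -- the third tree neighbor x of p
  have hnbreq := internal_nbr_eq hH' hnlp
  have hdegTp : (T.neighborSet p).ncard = 3 := by
    rw [← hnbreq]; exact hdp
  obtain ⟨a, b, c, hab, hac, hbc, habc⟩ := Set.ncard_eq_three.mp hdegTp
  have hqset : q ∈ ({a, b, c} : Set ℕ) := habc ▸ (mem_nbr.mpr hTpq)
  have hsset : s ∈ ({a, b, c} : Set ℕ) := habc ▸ (mem_nbr.mpr hTps)
  obtain ⟨x, hxset, hxq, hxs⟩ := third_elem hab hac hbc hqset hsset hqsne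
  have hTpx : T.Adj p x := by
    have : x ∈ T.neighborSet p := habc ▸ hxset
    exact this
  have hxr : x ≠ r := fun h => hnpr (hTG p r (h ▸ hTpx))
  -- apply the acyclicity lemma
  set S : Set ℕ := (↑T.verts : Set ℕ) \ {q, r, s} with hSdef
  have hfinS : S.Finite := T.verts.finite_toSet.subset Set.diff_subset
  have hpS : p ∈ S := by
    refine ⟨by rw [hTV]; exact hpmem, ?_⟩
    simp only [Set.mem_insert_iff, Set.mem_singleton_iff]
    push_neg
    exact ⟨adj_ne hpq, hprne, adj_ne hps⟩
  have hxS : x ∈ S := by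
    refine ⟨by rw [hTV]; exact (hTG p x hTpx) |> (G.support p x) |>.2, ?_⟩
    simp only [Set.mem_insert_iff, Set.mem_singleton_iff]
    push_neg
    exact ⟨hxq, hxr, hxs⟩
  refine acyclic_no_min2 hT.2.2 S hfinS p hpS ⟨x, hxS, hTpx⟩ ?_
  intro v hv hvne
  have hvT : v ∈ T.verts := hv.1
  have hvnot : v ∉ ({q, r, s} : Set ℕ) := hv.2
  have hnlv : ¬ T.IsLeaf v := fun hlv => hvnot (hleafmem v (by rwa [← hTV]) hlv)
  obtain ⟨a', b', c', hab', hac', hbc', hva, hvb, hvc⟩ :=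
    internal_three hT hcard2 hnd2 hvT hnlv
  have key : ∀ z, T.Adj v z → z ∉ S → z = r := by
    intro z hz hzS
    have hzT : z ∈ T.verts := (T.support v z hz).2
    have hzin : z ∈ ({q, r, s} : Set ℕ) := by
      by_contra hno
      exact hzS ⟨hzT, hno⟩
    rcases hzin with hzq | hzr | hzs
    · have : p = v := leaf_nbr_unique hlq hqp (hzq ▸ T.symm v z hz)
      exact absurd this.symm hvne
    · exact hzr
    · have : p = v := leaf_nbr_unique hls (T.symm p s hTps) (hzs ▸ T.symm v z hz)
      exact absurd this.symm hvne
  by_cases ha' : a' ∈ S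
  · by_cases hb' : b' ∈ S
    · exact ⟨a', ha', b', hb', hab', hva, hvb⟩
    · by_cases hc' : c' ∈ S
      · exact ⟨a', ha', c', hc', hac', hva, hvc⟩
      · exact absurd ((key b' hvb hb').trans (key c' hvc hc').symm) hbc'
  · by_cases hb' : b' ∈ S
    · by_cases hc' : c' ∈ S
      · exact ⟨b', hb', c', hc', hbc', hvb, hvc⟩
      · exact absurd ((key a' hva ha').trans (key c' hvc hc').symm) hac'
    · exact absurd ((key a' hva ha').trans (key b' hvb hb').symm) hab'

end Helpers

end FinGraph

open FinGraph in
/-- In a Halin graph, every D3a reduction collapses a triangle made of a tree vertex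
whose only children are two leaves together with those leaves, and every D3b
reduction removes the middle one of three consecutive leaf children of its parent. -/
theorem halin_reductions_at_leaves (G T : FinGraph) (h : FinGraph.IsHalinVia G T) :
    (∀ p q r p' q' r', G.D3aConfig p q r p' q' r' →
      ∃ a b c : ℕ, ({a, b, c} : Set ℕ) = {p, q, r} ∧
        T.Adj a b ∧ T.Adj a c ∧ T.IsLeaf b ∧ T.IsLeaf c ∧ T.degree a = 3) ∧
    (∀ p q r s, G.D3bConfig p q r s →
      T.Adj s p ∧ T.Adj s q ∧ T.Adj s r ∧ T.IsLeaf p ∧ T.IsLeaf q ∧ T.IsLeaf r ∧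
      FinGraph.cycleAdj G T p q ∧ FinGraph.cycleAdj G T q r) := by
  have hT := h.1
  have hTV := h.2.1
  have hcard := h.2.2.1
  have hnd2 := h.2.2.2.1
  have hTG := h.2.2.2.2.1
  have hcl := h.2.2.2.2.2.1
  have hc2 := h.2.2.2.2.2.2.1
  have hre := h.2.2.2.2.2.2.2.1
  have hcard2 : 2 ≤ T.verts.card := by omega
  have hcard3 : 3 ≤ T.verts.card := by omega
  constructor
  · -- D3a reductions
    intro p q r p' q' r' hcfg
    obtain ⟨hdp, hdq, hdr, hpq, hqr, hpr, hpp', hqq', hrr', hp'n, hq'n, hr'n,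
      hpq', hpr', hqr'⟩ := hcfg
    have hpmem : p ∈ G.verts := (G.support p q hpq).1
    have hqmem : q ∈ G.verts := (G.support p q hpq).2
    have hrmem : r ∈ G.verts := (G.support q r hqr).2
    have degT : ∀ a, ¬ T.IsLeaf a → G.degree a = 3 → T.degree a = 3 := by
      intro a hna hda
      unfold FinGraph.degree at hda ⊢
      rw [← internal_nbr_eq h hna]
      exact hda
    have h2int : ∀ a b c : ℕ, G.Adj a b → G.Adj a c → G.Adj b c →
        ¬ T.IsLeaf a → ¬ T.IsLeaf b → False := by
      intro a b c hab hac hbc hna hnb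
      exact tree_no_triangle hT (internal_TAdj h hna hab)
        (internal_TAdj h hnb hbc) (internal_TAdj h hna hac)
    by_cases hlp : T.IsLeaf p
    · by_cases hlq : T.IsLeaf q
      · by_cases hlr : T.IsLeaf r
        · -- all three are leaves: contradiction
          exfalso
          have cycpq : cycleAdj G T p q := ⟨hpq, no_leaf_leaf hT hcard3 hlp hlq⟩
          have cycpr : cycleAdj G T p r := ⟨hpr, no_leaf_leaf hT hcard3 hlp hlr⟩
          have cycqr : cycleAdj G T q r := ⟨hqr, no_leaf_leaf hT hcard3 hlq hlr⟩
          have cycqp := cycleAdj_symm cycpq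
          have cycrp := cycleAdj_symm cycpr
          have cycrq := cycleAdj_symm cycqr
          have cycp : {u | cycleAdj G T p u} = {q, r} :=
            set_pair_eq (hc2 p hpmem hlp) cycpq cycpr (adj_ne hqr)
          have cycq : {u | cycleAdj G T q u} = {p, r} :=
            set_pair_eq (hc2 q hqmem hlq) cycqp cycqr (adj_ne hpr)
          have cycr : {u | cycleAdj G T r u} = {p, q} :=
            set_pair_eq (hc2 r hrmem hlr) cycrp cycrq (adj_ne hpq)
          have hTpp' : T.Adj p p' := by
            rcases gadj_cases (T := T) hpp' with hh | hh
            · exact hh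
            · exfalso
              have : p' ∈ {u | cycleAdj G T p u} := hh
              rw [cycp] at this
              simp only [Set.mem_insert_iff, Set.mem_singleton_iff] at this
              rcases this with e | e <;> exact hp'n (by simp [e])
          have hTqq' : T.Adj q q' := by
            rcases gadj_cases (T := T) hqq' with hh | hh
            · exact hh
            · exfalso
              have : q' ∈ {u | cycleAdj G T q u} := hh
              rw [cycq] at this
              simp only [Set.mem_insert_iff, Set.mem_singleton_iff] at this
              rcases this with e | e <;> exact hq'n (by simp [e])
          have hTrr' : T.Adj r r' := by
            rcases gadj_cases (T := T) hrr' with hh | hh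
            · exact hh
            · exfalso
              have : r' ∈ {u | cycleAdj G T r u} := hh
              rw [cycr] at this
              simp only [Set.mem_insert_iff, Set.mem_singleton_iff] at this
              rcases this with e | e <;> exact hr'n (by simp [e])
          have hclosedA : ∀ a ∈ ({p, q, r} : Set ℕ), ∀ b, cycleAdj G T a b →
              b ∈ ({p, q, r} : Set ℕ) := by
            rintro a ha b hb
            rcases ha with h1 | h1 | h1
            · have : b ∈ {u | cycleAdj G T a u} := hb
              rw [h1, cycp] at this
              simp only [Set.mem_insert_iff, Set.mem_singleton_iff] at this
              rcases this with e | e <;> simp [e]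
            · have : b ∈ {u | cycleAdj G T a u} := hb
              rw [h1, cycq] at this
              simp only [Set.mem_insert_iff, Set.mem_singleton_iff] at this
              rcases this with e | e <;> simp [e]
            · have : b ∈ {u | cycleAdj G T a u} := hb
              rw [h1, cycr] at this
              simp only [Set.mem_insert_iff, Set.mem_singleton_iff] at this
              rcases this with e | e <;> simp [e]
          have hleafmem : ∀ v ∈ G.verts, T.IsLeaf v → v ∈ ({p, q, r} : Set ℕ) := by
            intro v hv hlv
            exact reach_closed hclosedA (by simp : p ∈ ({p, q, r} : Set ℕ))
              (hre p v hpmem hv hlp hlv)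
          set S : Set ℕ := (↑T.verts : Set ℕ) \ {p, q, r} with hSdef
          have hfinS : S.Finite := T.verts.finite_toSet.subset Set.diff_subset
          have hp'S : p' ∈ S := ⟨by rw [hTV]; exact (G.support p p' hpp').2, hp'n⟩
          have hall : ∀ v ∈ S, ∃ x ∈ S, ∃ y ∈ S, x ≠ y ∧ T.Adj v x ∧ T.Adj v y := by
            intro v hv
            have hvT : v ∈ T.verts := hv.1
            have hnlv : ¬ T.IsLeaf v := fun hlv => hv.2 (hleafmem v (by rwa [← hTV]) hlv)
            obtain ⟨a, b, c, hab, hac, hbc, hva, hvb, hvc⟩ :=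
              internal_three hT hcard2 hnd2 hvT hnlv
            have key : ∀ z, T.Adj v z → z ∉ S →
                (v = p' ∧ z = p) ∨ (v = q' ∧ z = q) ∨ (v = r' ∧ z = r) := by
              intro z hz hzS
              have hzT : z ∈ T.verts := (T.support v z hz).2
              have hzin : z ∈ ({p, q, r} : Set ℕ) := by
                by_contra hno
                exact hzS ⟨hzT, hno⟩
              rcases hzin with h1 | h1 | h1
              · exact Or.inl ⟨(leaf_nbr_unique hlp hTpp' (h1 ▸ T.symm v z hz)).symm, h1⟩
              · exact Or.inr (Or.inl
                  ⟨(leaf_nbr_unique hlq hTqq' (h1 ▸ T.symm v z hz)).symm, h1⟩)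
              · exact Or.inr (Or.inr
                  ⟨(leaf_nbr_unique hlr hTrr' (h1 ▸ T.symm v z hz)).symm, h1⟩)
            have key2 : ∀ z1 z2, z1 ≠ z2 → T.Adj v z1 → T.Adj v z2 →
                z1 ∉ S → z2 ∉ S → False := by
              intro z1 z2 hne h1 h2 hs1 hs2
              rcases key z1 h1 hs1 with ⟨e1, f1⟩ | ⟨e1, f1⟩ | ⟨e1, f1⟩ <;>
                rcases key z2 h2 hs2 with ⟨e2, f2⟩ | ⟨e2, f2⟩ | ⟨e2, f2⟩
              · exact hne (f1.trans f2.symm)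
              · exact hpq' (e1.symm.trans e2)
              · exact hpr' (e1.symm.trans e2)
              · exact hpq' (e2.symm.trans e1)
              · exact hne (f1.trans f2.symm)
              · exact hqr' (e1.symm.trans e2)
              · exact hpr' (e2.symm.trans e1)
              · exact hqr' (e2.symm.trans e1)
              · exact hne (f1.trans f2.symm)
            by_cases ha' : a ∈ S
            · by_cases hb' : b ∈ S
              · exact ⟨a, ha', b, hb', hab, hva, hvb⟩
              · by_cases hc' : c ∈ S
                · exact ⟨a, ha', c, hc', hac, hva, hvc⟩
                · exact absurd (key2 b c hbc hvb hvc hb' hc') not_false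
            · by_cases hb' : b ∈ S
              · by_cases hc' : c ∈ S
                · exact ⟨b, hb', c, hc', hbc, hvb, hvc⟩
                · exact absurd (key2 a c hac hva hvc ha' hc') not_false
              · exact absurd (key2 a b hab hva hvb ha' hb') not_false
          obtain ⟨x, hxS, y, hyS, hxy, hax, hay⟩ := hall p' hp'S
          exact acyclic_no_min2 hT.2.2 S hfinS p' hp'S ⟨x, hxS, hax⟩
            (fun v hv _ => hall v hv)
        · -- r is the internal vertex
          exact ⟨r, p, q, by ext x; simp only [Set.mem_insert_iff,
              Set.mem_singleton_iff]; tauto,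
            internal_TAdj h hlr (G.symm p r hpr), internal_TAdj h hlr (G.symm q r hqr),
            hlp, hlq, degT r hlr hdr⟩
      · by_cases hlr : T.IsLeaf r
        · -- q is the internal vertex
          exact ⟨q, p, r, by ext x; simp only [Set.mem_insert_iff,
              Set.mem_singleton_iff]; tauto,
            internal_TAdj h hlq (G.symm p q hpq), internal_TAdj h hlq hqr,
            hlp, hlr, degT q hlq hdq⟩
        · exact (h2int q r p hqr (G.symm p q hpq) (G.symm p r hpr) hlq hlr).elim
    · by_cases hlq : T.IsLeaf q
      · by_cases hlr : T.IsLeaf r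
        · -- p is the internal vertex
          exact ⟨p, q, r, rfl, internal_TAdj h hlp hpq, internal_TAdj h hlp hpr,
            hlq, hlr, degT p hlp hdp⟩
        · exact (h2int p r q hpr hpq (G.symm q r hqr) hlp hlr).elim
      · exact (h2int p q r hpq hpr hqr hlp hlq).elim
  · -- D3b reductions
    intro p q r s hcfg
    have hcfg' := hcfg
    obtain ⟨hdp, hdq, hdr, hpq, hqr, hnpr, hprne, hsp, hsq, hsr⟩ := hcfg
    have hpmem : p ∈ G.verts := (G.support p q hpq).1
    have hqmem : q ∈ G.verts := (G.support p q hpq).2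
    have hrmem : r ∈ G.verts := (G.support q r hqr).2
    have hsmem : s ∈ G.verts := (G.support s p hsp).1
    have hpsne : p ≠ s := (adj_ne hsp).symm
    have hrsne : r ≠ s := (adj_ne hsr).symm
    have hnbrq : ({p, r, s} : Set ℕ) = G.neighborSet q := by
      refine Set.eq_of_subset_of_ncard_le ?_ ?_ (nbr_finite G q)
      · intro u hu
        rcases hu with h1 | h1 | h1
        · rw [show u = p from h1]; exact G.symm p q hpq
        · rw [show u = r from h1]; exact hqr
        · rw [show u = s from h1]; exact G.symm s q hsq
      · have h3 : ({p, r, s} : Set ℕ).ncard = 3 :=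
          Set.ncard_eq_three.mpr ⟨p, r, s, hprne, hpsne, hrsne, rfl⟩
        rw [h3]
        exact le_of_eq hdq
    by_cases hlq : T.IsLeaf q
    · -- q is a leaf; find its tree neighbor
      have hqT : q ∈ T.verts := by rw [hTV]; exact hqmem
      obtain ⟨t, hTqt⟩ := exists_nbr hT hcard2 hqT
      have hGqt : G.Adj q t := hTG q t hTqt
      have htmem : t ∈ ({p, r, s} : Set ℕ) := by
        rw [hnbrq]
        exact hGqt
      rcases htmem with h1 | h1 | h1
      · exact (d3b_parent_first h hcfg' hlq (h1 ▸ hTqt)).elim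
      · have hcfgsw : G.D3bConfig r q p s :=
          ⟨hdr, hdq, hdp, G.symm q r hqr, G.symm p q hpq,
            fun hh => hnpr (G.symm r p hh), hprne.symm, hsr, hsq, hsp⟩
        exact (d3b_parent_first h hcfgsw hlq (h1 ▸ hTqt)).elim
      · -- the tree neighbor is the apex s
        have hTqs : T.Adj q s := h1 ▸ hTqt
        have cycqp : cycleAdj G T q p :=
          ⟨G.symm p q hpq, fun ht => adj_ne hsp (leaf_nbr_unique hlq hTqs ht)⟩
        have cycqr : cycleAdj G T q r :=
          ⟨hqr, fun ht => adj_ne hsr (leaf_nbr_unique hlq hTqs ht)⟩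
        have hlp := (hcl q p cycqp).2
        have hlr := (hcl q r cycqr).2
        have hnls : ¬ T.IsLeaf s := fun hl => no_leaf_leaf hT hcard3 hlq hl hTqs
        exact ⟨internal_TAdj h hnls hsp, T.symm q s hTqs, internal_TAdj h hnls hsr,
          hlp, hlq, hlr, cycleAdj_symm cycqp, cycqr⟩
    · -- q internal: contradiction
      exfalso
      have hTqp := internal_TAdj h hlq (G.symm p q hpq)
      have hTqr := internal_TAdj h hlq hqr
      have hTqs := internal_TAdj h hlq (G.symm s q hsq)
      have hlp : T.IsLeaf p := by
        by_contra hnlp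
        exact tree_no_triangle hT hTqp (internal_TAdj h hnlp (G.symm s p hsp)) hTqs
      have hlr : T.IsLeaf r := by
        by_contra hnlr
        exact tree_no_triangle hT hTqr (internal_TAdj h hnlr (G.symm s r hsr)) hTqs
      have hls : T.IsLeaf s := by
        by_contra hnls
        have hTsp := internal_TAdj h hnls hsp
        exact adj_ne (G.symm s q hsq)
          (leaf_nbr_unique hlp (T.symm q p hTqp) (T.symm s p hTsp))
      have hTnbrq : T.neighborSet q = G.neighborSet q := (internal_nbr_eq h hlq).symm
      have hnp : T.neighborSet p = {q} := leaf_nbr_eq hlp (T.symm q p hTqp)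
      have hnr : T.neighborSet r = {q} := leaf_nbr_eq hlr (T.symm q r hTqr)
      have hns : T.neighborSet s = {q} := leaf_nbr_eq hls (T.symm q s hTqs)
      have hvertsA : ∀ v ∈ T.verts, v ∈ ({p, q, r, s} : Set ℕ) := by
        intro v hv
        have hreach := hT.2.1 q (by rw [hTV]; exact hqmem) v hv
        refine reach_closed ?_ (by simp) hreach
        rintro a ha b ⟨hab, -, -⟩
        have hbmem : b ∈ T.neighborSet a := hab
        rcases ha with h1 | h1 | h1 | h1
        · rw [h1, hnp] at hbmem
          simp only [Set.mem_singleton_iff] at hbmem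
          simp [hbmem]
        · rw [h1, hTnbrq, ← hnbrq] at hbmem
          rcases hbmem with e | e | e <;> simp [e]
        · rw [h1, hnr] at hbmem
          simp only [Set.mem_singleton_iff] at hbmem
          simp [hbmem]
        · rw [h1, hns] at hbmem
          simp only [Set.mem_singleton_iff] at hbmem
          simp [hbmem]
      have cycps : cycleAdj G T p s :=
        ⟨G.symm s p hsp, fun ht => adj_ne (G.symm s q hsq)
          (leaf_nbr_unique hlp (T.symm q p hTqp) ht)⟩
      obtain ⟨α, β, hαβ, hset⟩ := Set.ncard_eq_two.mp (hc2 p hpmem hlp)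
      have hsmemc : s ∈ ({α, β} : Set ℕ) := by rw [← hset]; exact cycps
      obtain ⟨w, hwmem, hws⟩ : ∃ w ∈ ({α, β} : Set ℕ), w ≠ s := by
        rcases hsmemc with h1 | h1
        · exact ⟨β, by simp, fun e => hαβ (h1 ▸ e.symm)⟩
        · exact ⟨α, by simp, fun e => hαβ (h1 ▸ e)⟩
      have hcycpw : cycleAdj G T p w := by
        have : w ∈ {u | cycleAdj G T p u} := by rw [hset]; exact hwmem
        exact this
      have hwT : w ∈ T.verts := by rw [hTV]; exact (G.support p w hcycpw.1).2
      rcases hvertsA w hwT with h1 | h1 | h1 | h1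
      · exact adj_ne hcycpw.1 h1.symm
      · exact hcycpw.2 (by rw [h1]; exact T.symm q p hTqp)
      · exact hnpr (h1 ▸ hcycpw.1)
      · exact hws h1
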